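/- Minimum rank distance of the code with q-power parity-check matrix: the linear code C = {x ∈ GF(q^n)^n : H x^T = 0}, where H is the (d-1)×n matrix with entries h_j^{q^i} (i = 0,...,d-2) for h_1,...,h_n ∈ GF(q^n) linearly independent over GF(q), contains no nonzero codeword of rank norm less than d; hence its minimum rank distance is at least d. -/

import Mathlib

open Polynomial

section Aux

variable {K L : Type*} [Field K] [Fintype K] [Field L] [Fintype L] [Algebra K L]

omit [Fintype L] in
lemma frob_sum_smul {ι : Type*} (s : Finset ι) (c : ι → K) (v : ι → L) (N : ℕ) :
    (∑ j ∈ s, c j • v j) ^ (Fintype.card K) ^ N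
      = ∑ j ∈ s, c j • (v j ^ (Fintype.card K) ^ N) := by
  obtain ⟨e, hp, hq⟩ := FiniteField.card K (ringChar K)
  haveI : Fact (ringChar K).Prime := ⟨hp⟩
  haveI : CharP L (ringChar K) := charP_of_injective_algebraMap (algebraMap K L).injective _
  haveI : ExpChar L (ringChar K) := .prime hp
  have hqN : (Fintype.card K) ^ N = (ringChar K) ^ (e * N) := by rw [hq, ← pow_mul]
  rw [hqN]
  rw [show ((∑ j ∈ s, c j • v j) ^ (ringChar K) ^ (e * N))
      = iterateFrobenius L (ringChar K) (e * N) (∑ j ∈ s, c j • v j) from rfl]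
  rw [map_sum]
  refine Finset.sum_congr rfl fun j _ => ?_
  rw [iterateFrobenius_def, Algebra.smul_def, Algebra.smul_def, mul_pow, ← map_pow,
    ← hqN, FiniteField.pow_card_pow, hqN]

lemma moore_kernel {m : ℕ} {g : Fin m → L} (hg : LinearIndependent K g) (b : Fin m → L)
    (hb : ∀ i : Fin m, ∑ k, g k ^ (Fintype.card K) ^ (i : ℕ) * b k = 0) : b = 0 := by
  classical
  set q := Fintype.card K with hq
  have hq2 : 2 ≤ q := Fintype.one_lt_card
  set M : Matrix (Fin m) (Fin m) L := Matrix.of (fun i k => g k ^ q ^ (i : ℕ)) with hM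
  have hMb : M.mulVec b = 0 := by
    funext i
    simpa [M, Matrix.mulVec, dotProduct] using hb i
  have hunit : IsUnit M := by
    rw [← Matrix.linearIndependent_rows_iff_isUnit, Fintype.linearIndependent_iff]
    intro cc hcc
    have hrow : ∀ k, ∑ i, cc i * g k ^ q ^ (i : ℕ) = 0 := by
      intro k
      have := congrFun hcc k
      simpa [M, Finset.sum_apply] using this
    set f : L[X] := ∑ i : Fin m, C (cc i) * X ^ (q ^ (i : ℕ)) with hf
    have hroot : ∀ y ∈ Submodule.span K (Set.range g), f.eval y = 0 := by
      intro y hy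
      obtain ⟨t, rfl⟩ := (Submodule.mem_span_range_iff_exists_fun K).1 hy
      have heval : f.eval (∑ k, t k • g k) =
          ∑ i : Fin m, cc i * (∑ k, t k • g k) ^ q ^ (i : ℕ) := by
        simp [f, eval_finset_sum]
      rw [heval]
      have : ∀ i : Fin m, (∑ k, t k • g k) ^ q ^ (i : ℕ)
          = ∑ k, t k • (g k ^ q ^ (i : ℕ)) := fun i => frob_sum_smul _ _ _ _
      simp_rw [this, Finset.mul_sum, mul_smul_comm]
      rw [Finset.sum_comm]
      simp_rw [← Finset.smul_sum]
      simp_rw [fun k => show (∑ i, cc i * g k ^ q ^ (i:ℕ)) = 0 from hrow k]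
      simp
    have hf0 : f = 0 := by
      rcases Nat.eq_zero_or_pos m with hm | hm
      · subst hm; simp [f]
      by_contra hfne
      have hdeg : f.natDegree ≤ q ^ (m - 1) := by
        refine natDegree_sum_le_of_forall_le _ _ fun i _ => ?_
        refine (natDegree_C_mul_X_pow_le _ _).trans ?_
        exact Nat.pow_le_pow_right (by omega) (Nat.le_pred_of_lt i.2)
      set S := Submodule.span K (Set.range g)
      have hcard : Fintype.card S = q ^ m := by
        rw [Module.card_eq_pow_finrank (K := K) (V := S), finrank_span_eq_card hg, Fintype.card_fin]
      have hsub : (S : Set L).toFinset ⊆ f.roots.toFinset := by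
        intro y hy
        rw [Set.mem_toFinset] at hy
        rw [Multiset.mem_toFinset, mem_roots hfne]
        exact hroot y hy
      have hle : q ^ m ≤ q ^ (m - 1) := by
        calc q ^ m = Fintype.card S := hcard.symm
          _ = (S : Set L).toFinset.card := (Set.toFinset_card _).symm
          _ ≤ f.roots.toFinset.card := Finset.card_le_card hsub
          _ ≤ Multiset.card f.roots := Multiset.toFinset_card_le _
          _ ≤ f.natDegree := f.card_roots'
          _ ≤ q ^ (m - 1) := hdeg
      have : q ^ (m - 1) < q ^ m := Nat.pow_lt_pow_right (by omega) (by omega)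
      omega
    intro i
    have hcoeff : f.coeff (q ^ (i : ℕ)) = cc i := by
      rw [hf, finset_sum_coeff]
      simp_rw [coeff_C_mul, coeff_X_pow]
      rw [Finset.sum_eq_single i]
      · simp
      · intro j _ hj
        have : q ^ (i : ℕ) ≠ q ^ (j : ℕ) := by
          intro hcon
          exact hj (Fin.ext (Nat.pow_right_injective hq2 hcon.symm))
        simp [if_neg this]
      · simp
    rw [← hcoeff, hf0, coeff_zero]
  have hinj := Matrix.mulVec_injective_iff_isUnit.2 hunit
  have := hinj (a₁ := b) (a₂ := 0) (by rw [hMb, Matrix.mulVec_zero])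
  exact this

end Aux


/-- Minimum rank distance of the code with q-power parity-check matrix: the
linear code `C = {x ∈ GF(q^n)^n : H xᵀ = 0}`, where `H` has entries `h_j^{q^i}`
(`i = 0,...,d-2`) with `h₁,...,hₙ ∈ GF(q^n)` linearly independent over `GF(q)`, contains no
nonzero codeword of rank norm (dimension of the `GF(q)`-span of the coordinates) less than
`d`; hence its minimum rank distance is at least `d`. -/
theorem stmt17 (q d n : ℕ) (hd : d ≤ n)
    (K L : Type*) [Field K] [Fintype K] [Field L] [Fintype L] [Algebra K L]
    (hqK : Fintype.card K = q) (hqL : Fintype.card L = q ^ n)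
    (h : Fin n → L) (hind : LinearIndependent K h)
    (H : Matrix (Fin (d - 1)) (Fin n) L)
    (hH : ∀ (i : Fin (d - 1)) (j : Fin n), H i j = h j ^ q ^ (i : ℕ)) :
    ∀ x : Fin n → L, H.mulVec x = 0 → x ≠ 0 →
      d ≤ Module.finrank K (Submodule.span K (Set.range x)) := by
  classical
  subst hqK
  intro x hx hx0
  by_contra hlt
  push_neg at hlt
  set q := Fintype.card K with hq
  set S := Submodule.span K (Set.range x) with hS
  set m := Module.finrank K S with hm
  have hxS : ∀ j, x j ∈ S := fun j => Submodule.subset_span ⟨j, rfl⟩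
  haveI : Nontrivial S := by
    obtain ⟨j, hj⟩ := Function.ne_iff.1 hx0
    exact nontrivial_of_ne ⟨x j, hxS j⟩ 0 (by simpa using hj)
  have hm1 : 0 < m := by rw [hm, Module.finrank_pos_iff]; infer_instance
  let b : Module.Basis (Fin m) K S := Module.finBasis K S
  let bL : Fin m → L := fun k => (b k : L)
  have hbind : LinearIndependent K bL :=
    b.linearIndependent.map' S.subtype (Submodule.ker_subtype S)
  let c : Fin n → Fin m → K := fun j k => b.repr ⟨x j, hxS j⟩ k
  have hxeq : ∀ j, x j = ∑ k, c j k • bL k := by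
    intro j
    have h1 := b.sum_repr ⟨x j, hxS j⟩
    have h2 := congrArg (Subtype.val) h1
    simp only [Submodule.coe_sum] at h2
    simpa [bL, c] using h2.symm
  let g : Fin m → L := fun k => ∑ j, c j k • h j
  have hkey : ∀ i : Fin m, ∑ k, g k ^ q ^ (i : ℕ) * bL k = 0 := by
    intro i
    have him : (i : ℕ) < d - 1 := by have := i.2; omega
    have h0 := congrFun hx (⟨i, him⟩ : Fin (d - 1))
    simp only [Matrix.mulVec, dotProduct, hH, Pi.zero_apply] at h0
    calc ∑ k, g k ^ q ^ (i : ℕ) * bL k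
        = ∑ k, (∑ j, c j k • h j ^ q ^ (i : ℕ)) * bL k := by
          refine Finset.sum_congr rfl fun k _ => ?_
          rw [show g k = ∑ j, c j k • h j from rfl, frob_sum_smul]
      _ = ∑ j, h j ^ q ^ (i : ℕ) * x j := by
          simp_rw [Finset.sum_mul, smul_mul_assoc]
          rw [Finset.sum_comm]
          simp_rw [hxeq, Finset.mul_sum, mul_smul_comm]
      _ = 0 := h0
  have hgind : LinearIndependent K g := by
    rw [Fintype.linearIndependent_iff]
    intro t ht
    have hcoords : ∀ j, ∑ k, c j k * t k = 0 := by
      have hsum : ∑ j, (∑ k, c j k * t k) • h j = 0 := by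
        rw [show (0 : L) = ∑ k, t k • g k from ht.symm]
        simp_rw [g, Finset.smul_sum, smul_smul]
        rw [Finset.sum_comm]
        simp_rw [Finset.sum_smul, mul_comm]
      exact fun j => Fintype.linearIndependent_iff.1 hind _ hsum j
    intro k0
    obtain ⟨dk, hdk⟩ := (Submodule.mem_span_range_iff_exists_fun K).1 (b k0).2
    have hA : ∀ l, (∑ j, dk j * c j l) = if l = k0 then 1 else 0 := by
      have h1 : ∑ l, (∑ j, dk j * c j l) • bL l = bL k0 := by
        rw [show bL k0 = ∑ j, dk j • x j from hdk.symm]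
        simp_rw [hxeq, Finset.smul_sum, smul_smul, Finset.sum_smul]
        rw [Finset.sum_comm]
      have h2 : ∑ l, (if l = k0 then (1 : K) else 0) • bL l = bL k0 := by simp
      have h3 := Fintype.linearIndependent_iff.1 hbind
        (fun l => (∑ j, dk j * c j l) - (if l = k0 then 1 else 0))
        (by simp only [sub_smul, Finset.sum_sub_distrib, h1, h2, sub_self])
      exact fun l => sub_eq_zero.1 (h3 l)
    have hmain : ∑ j, dk j * (∑ k, c j k * t k) = t k0 := by
      simp_rw [Finset.mul_sum, ← mul_assoc]
      rw [Finset.sum_comm]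
      simp_rw [← Finset.sum_mul, hA]
      simp
    have hz : ∑ j, dk j * (∑ k, c j k * t k) = 0 := by simp [hcoords]
    rw [← hmain]; exact hz
  have hbzero := moore_kernel hgind bL hkey
  have hne := Module.Basis.ne_zero b ⟨0, hm1⟩
  have : bL ⟨0, hm1⟩ = 0 := congrFun hbzero _
  exact hne (ZeroMemClass.coe_eq_zero.1 this)
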